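/- Suppose a < q < b in [0,1] with ūA(y) > ūB(y) for all y ∈ (a, q) and ūB(y) > ūA(y) for all y ∈ (q, b). Then every Carathéodory solution x of the continuous-time imitation population dynamics with x(0) in the interior of 𝒳_s and σ(x(0)) ∈ (a, b) satisfies x(t) → qρ as t → ∞. -/

import Mathlib

open scoped Classical
open MeasureTheory Filter Set

/-- The state space `ℝ^p`, with the Euclidean norm. -/
abbrev Vec (p : ℕ) := EuclideanSpace ℝ (Fin p)

/-- Maximum of finitely many polynomial utilities at `y`. -/
noncomputable def ubar {p : ℕ} (u : Fin p → Polynomial ℝ) (y : ℝ) : ℝ :=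
  ⨆ i, (u i).eval y

/-- The total proportion of `A`-players: `σ(x) = Σ_i x_i`. -/
noncomputable def sigma' {p : ℕ} (x : Vec p) : ℝ := ∑ i, x i

/-- The state space `𝒳_s = ∏_i [0, ρ_i]`. -/
def Xs {p : ℕ} (ρ : Vec p) : Set (Vec p) := {x | ∀ i, x i ∈ Set.Icc 0 (ρ i)}

/-- The set-valued map of the continuous-time imitation population dynamics. -/
noncomputable def Vmap {p : ℕ} (ρ : Vec p) (uA uB : Fin p → Polynomial ℝ)
    (x : Vec p) : Set (Vec p) :=
  if x ∈ interior (Xs ρ) ∧ ubar uB (sigma' x) < ubar uA (sigma' x) then {ρ - x}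
  else if x ∈ interior (Xs ρ) ∧ ubar uA (sigma' x) < ubar uB (sigma' x) then {-x}
  else segment ℝ (ρ - x) (-x)

/-- A Carathéodory solution of the continuous-time imitation population dynamics on `[0,∞)`:
a locally absolutely continuous `𝒳_s`-valued function whose derivative lies in `Vmap`
almost everywhere, expressed in integral form. -/
def IsPopSol {p : ℕ} (ρ : Vec p) (uA uB : Fin p → Polynomial ℝ) (x : ℝ → Vec p) : Prop :=
  (∀ t, 0 ≤ t → x t ∈ Xs ρ) ∧
  ∃ v : ℝ → Vec p,
    (∀ᵐ t ∂(MeasureTheory.volume.restrict (Set.Ici (0:ℝ))), v t ∈ Vmap ρ uA uB (x t)) ∧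
    (∀ t, 0 ≤ t → IntervalIntegrable v MeasureTheory.volume 0 t) ∧
    (∀ t, 0 ≤ t → x t = x 0 + ∫ s in (0:ℝ)..t, v s)

/-! ### Auxiliary lemmas -/

lemma interior_Xs {p : ℕ} (ρ : Vec p) :
    interior (Xs ρ) = {x : Vec p | ∀ i, x i ∈ Set.Ioo 0 (ρ i)} := by
  have h1 : Xs ρ = (PiLp.homeomorph 2 (fun _ : Fin p => ℝ)) ⁻¹'
      Set.pi Set.univ (fun i => Set.Icc (0:ℝ) (ρ i)) := by
    ext x
    exact ⟨fun h i _ => h i, fun h i => h i (Set.mem_univ i)⟩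
  rw [h1, ← Homeomorph.preimage_interior, interior_pi_set Set.finite_univ]
  ext x
  constructor
  · intro h i
    have := h i (Set.mem_univ i)
    simp only [interior_Icc] at this; exact this
  · intro h i _
    simp only [interior_Icc]; exact h i

lemma prim_contOn (g : ℝ → ℝ) (hint : ∀ t, 0 ≤ t → IntervalIntegrable g volume 0 t) :
    ContinuousOn (fun t => ∫ τ in (0:ℝ)..t, g τ) (Set.Ici 0) := by
  intro t ht
  have ht' : (0:ℝ) ≤ t := ht
  have h1 : (0:ℝ) ∈ Set.uIcc (0:ℝ) (t+1) := Set.left_mem_uIcc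
  have hc : ContinuousOn (fun b => ∫ τ in (0:ℝ)..b, g τ) (Set.uIcc (0:ℝ) (t+1)) :=
    intervalIntegral.continuousOn_primitive_interval' (hint (t+1) (by linarith)) h1
  have huIcc : Set.uIcc (0:ℝ) (t+1) = Set.Icc 0 (t+1) := Set.uIcc_of_le (by linarith)
  rw [huIcc] at hc
  have hmem : Set.Icc (0:ℝ) (t+1) ∈ nhdsWithin t (Set.Ici 0) := by
    rw [show Set.Icc (0:ℝ) (t+1) = Set.Ici 0 ∩ Set.Iic (t+1) from (Set.Ici_inter_Iic).symm]
    exact Filter.inter_mem self_mem_nhdsWithin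
      (mem_nhdsWithin_of_mem_nhds (Iic_mem_nhds (by linarith)))
  exact (hc t ⟨ht', by linarith⟩).mono_of_mem_nhdsWithin hmem

lemma pos_lemma (T : ℝ) (f : ℝ → ℝ) (hf : ContinuousOn f (Set.Icc 0 T))
    (h0 : 0 < f 0)
    (hineq : ∀ t1 t2, 0 ≤ t1 → t1 ≤ t2 → t2 ≤ T →
      f t1 - ∫ τ in t1..t2, f τ ≤ f t2) :
    ∀ t ∈ Set.Icc (0:ℝ) T, 0 < f t := by
  by_contra hcon
  push_neg at hcon
  obtain ⟨t0, ht0, ht0f⟩ := hcon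
  have hT : 0 ≤ T := ht0.1.trans ht0.2
  set Z : Set ℝ := {t ∈ Set.Icc (0:ℝ) T | f t ≤ 0} with hZ
  have hZc : IsClosed Z := hf.preimage_isClosed_of_isClosed isClosed_Icc isClosed_Iic
  have hZne : Z.Nonempty := ⟨t0, ht0, ht0f⟩
  have hZbdd : BddBelow Z := ⟨0, fun z hz => hz.1.1⟩
  set τ := sInf Z with hτ
  have hτZ : τ ∈ Z := hZc.csInf_mem hZne hZbdd
  have hτI : τ ∈ Set.Icc (0:ℝ) T := hτZ.1
  have hτf : f τ ≤ 0 := hτZ.2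
  have hτpos : 0 < τ := by
    rcases lt_or_eq_of_le hτI.1 with h | h
    · exact h
    · exfalso; have : f τ = f 0 := by rw [← h]
      linarith
  have hlt : ∀ t, 0 ≤ t → t < τ → 0 < f t := by
    intro t h1 h2
    by_contra hc
    push_neg at hc
    have : t ∈ Z := ⟨⟨h1, h2.le.trans hτI.2⟩, hc⟩
    exact absurd (csInf_le hZbdd this) (not_le.mpr h2)
  set δ := min τ (1/2 : ℝ) with hδ
  have hδpos : 0 < δ := lt_min hτpos (by norm_num)
  have hδτ : δ ≤ τ := min_le_left _ _
  have hsub : Set.Icc (τ - δ) τ ⊆ Set.Icc 0 T :=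
    Set.Icc_subset_Icc (by linarith) hτI.2
  obtain ⟨ξ, hξI, hξmax⟩ := (isCompact_Icc (a := τ - δ) (b := τ)).exists_isMaxOn
    (Set.nonempty_Icc.mpr (by linarith)) (hf.mono hsub)
  set m := f ξ with hm
  have hmpos : 0 < m := by
    have h1 : τ - δ ∈ Set.Icc (τ - δ) τ := Set.left_mem_Icc.mpr (by linarith)
    have h2 : 0 < f (τ - δ) := hlt _ (by
      have := hsub h1; exact this.1) (by linarith)
    exact lt_of_lt_of_le h2 (hξmax h1)
  have hξ0 : 0 ≤ ξ := (hsub hξI).1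
  have hint : IntervalIntegrable f volume ξ τ := by
    apply ContinuousOn.intervalIntegrable
    rw [Set.uIcc_of_le hξI.2]
    exact hf.mono ((Set.Icc_subset_Icc hξI.1 le_rfl).trans hsub)
  have key : f ξ ≤ ∫ τ' in ξ..τ, f τ' := by
    have := hineq ξ τ hξ0 hξI.2 hτI.2
    linarith
  have hintle : (∫ τ' in ξ..τ, f τ') ≤ m * (τ - ξ) := by
    have : (∫ τ' in ξ..τ, f τ') ≤ ∫ _ in ξ..τ, m := by
      apply intervalIntegral.integral_mono_on hξI.2 hint intervalIntegrable_const
      intro u hu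
      exact hξmax (Set.Icc_subset_Icc hξI.1 le_rfl hu)
    rw [intervalIntegral.integral_const, smul_eq_mul] at this; linarith
  have : m ≤ m * δ := by
    have h2 : m * (τ - ξ) ≤ m * δ :=
      mul_le_mul_of_nonneg_left (by linarith [hξI.1]) hmpos.le
    calc m = f ξ := rfl
    _ ≤ ∫ τ' in ξ..τ, f τ' := key
    _ ≤ m * (τ - ξ) := hintle
    _ ≤ m * δ := h2
  nlinarith [min_le_right τ (1/2:ℝ)]

lemma ae_Ioo_of_Icc (u v : ℝ) :
    ∀ᵐ t ∂(volume.restrict (Set.Icc u v)), t ∈ Set.Ioo u v := by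
  have h : (volume.restrict (Set.Icc u v)) {t | ¬ t ∈ Set.Ioo u v} = 0 := by
    rw [Measure.restrict_apply' measurableSet_Icc]
    have hsub : {t : ℝ | ¬ t ∈ Set.Ioo u v} ∩ Set.Icc u v ⊆ {u, v} := by
      intro t ⟨h1, h2⟩
      simp only [Set.mem_Ioo, not_and_or, not_lt] at h1
      simp only [Set.mem_insert_iff, Set.mem_singleton_iff]
      rcases h1 with h | h
      · left; exact le_antisymm h h2.1
      · right; exact le_antisymm h2.2 h
    exact measure_mono_null hsub (((Set.finite_singleton v).insert u).measure_zero volume)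
  exact h

lemma inv_low (s w : ℝ → ℝ) (hs : ContinuousOn s (Set.Ici 0))
    (hint : ∀ t, 0 ≤ t → IntervalIntegrable w volume 0 t)
    (heq : ∀ t, 0 ≤ t → s t = s 0 + ∫ τ in (0:ℝ)..t, w τ)
    (c q' : ℝ) (hcq : c < q')
    (hdrift : ∀ᵐ t ∂(volume.restrict (Set.Ici 0)), s t ∈ Set.Ioo c q' → 0 ≤ w t) :
    ∀ t1 t2, 0 ≤ t1 → t1 ≤ t2 → c < s t1 → min (s t1) q' ≤ s t2 := by
  have hdiff : ∀ u v, 0 ≤ u → u ≤ v → s v - s u = ∫ τ in u..v, w τ := by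
    intro u v hu huv
    rw [heq u hu, heq v (hu.trans huv)]
    have := intervalIntegral.integral_interval_sub_left (hint v (hu.trans huv)) (hint u hu)
    linarith [this]
  intro t1 t2 ht1 ht12 hcs
  by_contra hcon
  push_neg at hcon
  set L := min (s t1) q' with hLdef
  have hcL : c < L := lt_min hcs hcq
  have hst2 : s t2 < L := hcon
  set m' := (max c (s t2) + L) / 2 with hm'def
  set m'' := (m' + L) / 2 with hm''def
  have hmaxL : max c (s t2) < L := max_lt hcL hst2
  have hcm' : c < m' := by
    have := le_max_left c (s t2); simp only [hm'def]; linarith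
  have hst2m' : s t2 < m' := by
    have := le_max_right c (s t2); simp only [hm'def]; linarith
  have hm'm'' : m' < m'' := by simp only [hm''def]; linarith [hmaxL]
  have hm''L : m'' < L := by simp only [hm''def]; linarith [hmaxL]
  have hm''q' : m'' < q' := hm''L.trans_le (min_le_right _ _)
  have hm''s1 : m'' ≤ s t1 := hm''L.le.trans (min_le_left _ _)
  have hIccIci : Set.Icc t1 t2 ⊆ Set.Ici (0:ℝ) := fun t ht => ht1.trans ht.1
  set K : Set ℝ := Set.Icc t1 t2 ∩ s ⁻¹' (Set.Ici m'') with hKdef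
  have hKc : IsClosed K :=
    (hs.mono hIccIci).preimage_isClosed_of_isClosed isClosed_Icc isClosed_Ici
  have hKne : K.Nonempty := ⟨t1, ⟨le_rfl, ht12⟩, hm''s1⟩
  have hKbdd : BddAbove K := ⟨t2, fun z hz => hz.1.2⟩
  set T1 := sSup K with hT1def
  have hT1K : T1 ∈ K := hKc.csSup_mem hKne hKbdd
  have hT1I : T1 ∈ Set.Icc t1 t2 := hT1K.1
  have hsT1 : m'' ≤ s T1 := hT1K.2
  have hT1t2 : T1 < t2 := by
    rcases lt_or_eq_of_le hT1I.2 with h | h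
    · exact h
    · exfalso
      have : m'' ≤ s t2 := h ▸ hsT1
      linarith
  have hKabove : ∀ t, t ∈ Set.Icc t1 t2 → T1 < t → s t < m'' := by
    intro t htI htT1
    by_contra hc
    push_neg at hc
    exact absurd (le_csSup hKbdd ⟨htI, hc⟩) (not_le.mpr htT1)
  have hT10 : (0:ℝ) ≤ T1 := ht1.trans hT1I.1
  set K2 : Set ℝ := Set.Icc T1 t2 ∩ s ⁻¹' (Set.Iic m') with hK2def
  have hK2c : IsClosed K2 :=
    ((hs.mono (fun t ht => hT10.trans ht.1)).preimage_isClosed_of_isClosed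
      isClosed_Icc isClosed_Iic)
  have hK2ne : K2.Nonempty := ⟨t2, ⟨hT1t2.le, le_rfl⟩, hst2m'.le⟩
  have hK2bdd : BddBelow K2 := ⟨T1, fun z hz => hz.1.1⟩
  set T2 := sInf K2 with hT2def
  have hT2K : T2 ∈ K2 := hK2c.csInf_mem hK2ne hK2bdd
  have hsT2 : s T2 ≤ m' := hT2K.2
  have hT2I : T2 ∈ Set.Icc T1 t2 := hT2K.1
  have hT1T2 : T1 < T2 := by
    rcases lt_or_eq_of_le hT2I.1 with h | h
    · exact h
    · exfalso
      rw [← h] at hsT2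
      linarith
  have hK2below : ∀ t, t ∈ Set.Icc T1 t2 → t < T2 → m' < s t := by
    intro t htI htT2
    by_contra hc
    push_neg at hc
    exact absurd (csInf_le hK2bdd ⟨htI, hc⟩) (not_le.mpr htT2)
  have hdrift' : ∀ᵐ t ∂(volume.restrict (Set.Icc T1 T2)),
      (s t ∈ Set.Ioo c q' → 0 ≤ w t) :=
    ae_restrict_of_ae_restrict_of_subset (fun t ht => hT10.trans ht.1) hdrift
  have hae : ∀ᵐ t ∂(volume.restrict (Set.Icc T1 T2)), 0 ≤ w t := by
    filter_upwards [hdrift', ae_Ioo_of_Icc T1 T2] with t hw ht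
    apply hw
    have htI : t ∈ Set.Icc t1 t2 := ⟨hT1I.1.trans ht.1.le, ht.2.le.trans hT2I.2⟩
    have h1 : s t < m'' := hKabove t htI ht.1
    have h2 : m' < s t := hK2below t ⟨ht.1.le, htI.2⟩ ht.2
    exact ⟨hcm'.trans h2, h1.trans hm''q'⟩
  have hpos : 0 ≤ ∫ τ in T1..T2, w τ :=
    intervalIntegral.integral_nonneg_of_ae_restrict hT1T2.le hae
  have := hdiff T1 T2 hT10 hT1T2.le
  linarith

lemma scalar_lower (s w : ℝ → ℝ) (hs : ContinuousOn s (Set.Ici 0))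
    (hint : ∀ t, 0 ≤ t → IntervalIntegrable w volume 0 t)
    (heq : ∀ t, 0 ≤ t → s t = s 0 + ∫ τ in (0:ℝ)..t, w τ)
    (c q' δ B : ℝ) (hδ : 0 < δ) (hcq : c < q')
    (hB : ∀ t, 0 ≤ t → s t ≤ B)
    (hdrift : ∀ᵐ t ∂(volume.restrict (Set.Ici 0)), s t ∈ Set.Ioo c q' → δ ≤ w t)
    (h0 : c < s 0) :
    ∀ ε, 0 < ε → ∀ᶠ t in Filter.atTop, q' - ε ≤ s t := by
  intro ε hε
  have hdrift0 : ∀ᵐ t ∂(volume.restrict (Set.Ici 0)), s t ∈ Set.Ioo c q' → 0 ≤ w t :=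
    hdrift.mono fun t h hm => hδ.le.trans (h hm)
  have hinv := inv_low s w hs hint heq c q' hcq hdrift0
  have hcmin : c < min (s 0) q' := lt_min h0 hcq
  have hlow : ∀ t, 0 ≤ t → c < s t := fun t ht =>
    hcmin.trans_le (hinv 0 t le_rfl ht h0)
  have step1 : ∃ t', 0 ≤ t' ∧ q' - ε ≤ s t' := by
    by_contra hcon
    push_neg at hcon
    have hall : ∀ t, 0 ≤ t → s t < q' - ε := fun t ht => hcon t ht
    set T := (B - s 0)/δ + 1 with hTdef
    have hsB : s 0 ≤ B := hB 0 le_rfl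
    have hT0 : 0 < T := by
      have h : 0 ≤ (B - s 0)/δ := div_nonneg (by linarith) hδ.le
      rw [hTdef]; linarith
    have haeT : (fun _ : ℝ => δ) ≤ᵐ[volume.restrict (Set.Icc 0 T)] w := by
      have hdrift' : ∀ᵐ t ∂(volume.restrict (Set.Icc 0 T)),
          (s t ∈ Set.Ioo c q' → δ ≤ w t) :=
        ae_restrict_of_ae_restrict_of_subset (fun t ht => ht.1) hdrift
      filter_upwards [hdrift', ae_restrict_mem measurableSet_Icc] with t hw ht
      exact hw ⟨hlow t ht.1, (hall t ht.1).trans (by linarith)⟩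
    have hwT := hint T hT0.le
    have hconst : IntervalIntegrable (fun _ : ℝ => δ) volume 0 T := intervalIntegrable_const
    have hTle : δ * T ≤ ∫ τ in (0:ℝ)..T, w τ := by
      have := intervalIntegral.integral_mono_ae_restrict hT0.le hconst hwT haeT
      rw [intervalIntegral.integral_const, smul_eq_mul] at this
      linarith [this]
    have : B < s T := by
      have hsT := heq T hT0.le
      have : δ * T = B - s 0 + δ := by
        rw [hTdef]
        field_simp
      nlinarith [hTle, hsT]
    exact absurd (hB T hT0.le) (not_le.mpr this)
  obtain ⟨t', ht'0, ht's⟩ := step1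
  rw [Filter.eventually_atTop]
  refine ⟨t', fun t ht => ?_⟩
  have := hinv t' t ht'0 ht (hlow t' ht'0)
  have hmin : q' - ε ≤ min (s t') q' := le_min ht's (by linarith)
  linarith [this, hmin]

lemma decay (f : ℝ → ℝ) (hf : ContinuousOn f (Set.Ici 0))
    (heq : ∀ t, 0 ≤ t → f t = f 0 - ∫ τ in (0:ℝ)..t, f τ) :
    ∀ t, 0 ≤ t → f t = f 0 * Real.exp (-t) := by
  set g : ℝ → ℝ := fun t => f (max t 0) with hgdef
  have hg : Continuous g := by
    apply hf.comp_continuous (continuous_id.max continuous_const)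
    intro x; exact le_max_right x 0
  have hgf : ∀ t, 0 ≤ t → g t = f t := by
    intro t ht; simp only [hgdef, max_eq_left ht]
  set u : ℝ → ℝ := fun t => ∫ τ in (0:ℝ)..t, g τ with hudef
  have hu : ∀ t, HasDerivAt u (g t) t := fun t =>
    (hg.integral_hasStrictDerivAt 0 t).hasDerivAt
  have hueq : ∀ t, 0 ≤ t → g t = f 0 - u t := by
    intro t ht
    have hcongr : ∫ τ in (0:ℝ)..t, g τ = ∫ τ in (0:ℝ)..t, f τ := by
      apply intervalIntegral.integral_congr
      intro τ hτ
      rw [Set.uIcc_of_le ht] at hτ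
      exact hgf τ hτ.1
    rw [hgf t ht, hudef]
    simp only [hcongr]
    exact heq t ht
  set φ : ℝ → ℝ := fun t => Real.exp t * (u t - f 0) with hφdef
  have hφd : ∀ t, HasDerivAt φ (Real.exp t * (u t - f 0) + Real.exp t * g t) t := by
    intro t
    have h1 : HasDerivAt (fun t => u t - f 0) (g t) t := (hu t).sub_const _
    exact (Real.hasDerivAt_exp t).mul h1
  have hφ0 : ∀ t, 0 ≤ t → HasDerivAt φ 0 t := by
    intro t ht
    have := hφd t
    rw [hueq t ht] at this
    convert this using 1
    ring
  intro t ht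
  have hucont : Continuous u :=
    intervalIntegral.continuous_primitive (fun a b => hg.intervalIntegrable a b) 0
  have hφcont : Continuous φ := Real.continuous_exp.mul (hucont.sub continuous_const)
  have hconst : φ t = φ 0 := by
    apply constant_of_has_deriv_right_zero (f := φ) (a := 0) (b := t) hφcont.continuousOn
    · intro y hy
      exact (hφ0 y hy.1).hasDerivWithinAt
    · exact ⟨ht, le_rfl⟩
  have hu0 : u 0 = 0 := by simp [hudef]
  have hφ0v : φ 0 = - f 0 := by simp [hφdef, hu0]
  have hφt : Real.exp t * (u t - f 0) = - f 0 := by rw [← hφ0v]; exact hconst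
  have hexp : Real.exp t ≠ 0 := (Real.exp_pos t).ne'
  have huval : u t = f 0 - f 0 * Real.exp (-t) := by
    have h2 : u t - f 0 = - f 0 * Real.exp (-t) := by
      have he : Real.exp (-t) * Real.exp t = 1 := by rw [← Real.exp_add]; simp
      linear_combination Real.exp (-t) * hφt - (u t - f 0) * he
    rw [Real.exp_neg] at h2 ⊢
    linarith [h2]
  have := hueq t ht
  rw [hgf t ht] at this
  rw [this, huval]
  ring

theorem population_convergence_to_interior_attractor
    {p : ℕ} (hp : 0 < p) (ρ : Vec p) (hρ : ∀ i, 0 < ρ i) (hsum : ∑ i, ρ i = 1)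
    (uA uB : Fin p → Polynomial ℝ)
    (a q b : ℝ) (ha : 0 ≤ a) (hb : b ≤ 1) (haq : a < q) (hqb : q < b)
    (hleft : ∀ y ∈ Set.Ioo a q, ubar uB y < ubar uA y)
    (hright : ∀ y ∈ Set.Ioo q b, ubar uA y < ubar uB y) :
    ∀ x : ℝ → Vec p, IsPopSol ρ uA uB x → x 0 ∈ interior (Xs ρ) →
      sigma' (x 0) ∈ Set.Ioo a b →
      Filter.Tendsto x Filter.atTop (nhds (q • ρ)) := by
  intro x hsol hx0int hs0mem
  obtain ⟨hXs, v, hv, hvint, hxeq⟩ := hsol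
  -- coordinate integrability
  have hviint : ∀ (i : Fin p) t, 0 ≤ t →
      IntervalIntegrable (fun τ => v τ i) volume 0 t := by
    intro i t ht
    have h := hvint t ht
    constructor
    · exact ((EuclideanSpace.proj i : Vec p →L[ℝ] ℝ).integrable_comp h.1)
    · exact ((EuclideanSpace.proj i : Vec p →L[ℝ] ℝ).integrable_comp h.2)
  -- coordinate identity
  have hxi : ∀ (i : Fin p) t, 0 ≤ t →
      x t i = x 0 i + ∫ τ in (0:ℝ)..t, v τ i := by
    intro i t ht
    have h := hxeq t ht
    have h2 : x t i = x 0 i + (∫ τ in (0:ℝ)..t, v τ) i := by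
      rw [h]; rfl
    rw [h2]
    congr 1
    have := (EuclideanSpace.proj i : Vec p →L[ℝ] ℝ).intervalIntegral_comp_comm (hvint t ht)
      (a := 0) (b := t)
    simp only [PiLp.proj_apply] at this
    exact this.symm
  -- the scalar dynamics
  set s : ℝ → ℝ := fun t => sigma' (x t) with hsdef
  set w : ℝ → ℝ := fun t => ∑ i, v t i with hwdef
  have hwint : ∀ t, 0 ≤ t → IntervalIntegrable w volume 0 t := by
    intro t ht
    have h0 := IntervalIntegrable.sum (μ := volume) (a := (0:ℝ)) (b := t)
      Finset.univ (f := fun (i : Fin p) (τ : ℝ) => v τ i) (fun i _ => hviint i t ht)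
    have heqf : (∑ i : Fin p, fun (τ : ℝ) => v τ i) = fun τ => ∑ i, v τ i := by
      funext τ
      simp [Finset.sum_apply]
    rwa [heqf] at h0
  have hseq : ∀ t, 0 ≤ t → s t = s 0 + ∫ τ in (0:ℝ)..t, w τ := by
    intro t ht
    simp only [hsdef, sigma', hwdef]
    rw [intervalIntegral.integral_finset_sum (fun i _ => hviint i t ht)]
    rw [← Finset.sum_add_distrib]
    exact Finset.sum_congr rfl fun i _ => hxi i t ht
  -- θ-representation
  have hθ : ∀ᵐ t ∂(volume.restrict (Set.Ici (0:ℝ))),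
      ∃ θ : ℝ, θ ∈ Set.Icc (0:ℝ) 1 ∧ v t = θ • ρ - x t := by
    filter_upwards [hv] with t hvt
    unfold Vmap at hvt
    split_ifs at hvt with h1 h2
    · refine ⟨1, ⟨zero_le_one, le_rfl⟩, ?_⟩
      rw [Set.mem_singleton_iff] at hvt
      rw [hvt, one_smul]
    · refine ⟨0, ⟨le_rfl, zero_le_one⟩, ?_⟩
      rw [Set.mem_singleton_iff] at hvt
      rw [hvt, zero_smul, zero_sub]
    · obtain ⟨α, β, hα, hβ, hαβ, hcomb⟩ := hvt
      refine ⟨α, ⟨hα, by linarith⟩, ?_⟩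
      rw [← hcomb]
      have hβ' : β = 1 - α := by linarith
      rw [hβ']
      rw [smul_sub, smul_neg, sub_smul, one_smul]
      abel
  -- positivity of coordinates
  have hx0pos : ∀ i, x 0 i ∈ Set.Ioo 0 (ρ i) := by
    rw [interior_Xs] at hx0int
    exact hx0int
  have hbound : ∀ᵐ t ∂(volume.restrict (Set.Ici (0:ℝ))),
      ∀ i, -(x t i) ≤ v t i ∧ v t i ≤ ρ i - x t i := by
    filter_upwards [hθ] with t ⟨θ, hθI, hθeq⟩ i
    have : v t i = θ * ρ i - x t i := by
      rw [hθeq]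
      simp [PiLp.sub_apply, PiLp.smul_apply, smul_eq_mul]
    rw [this]
    constructor
    · nlinarith [hθI.1, (hρ i).le]
    · nlinarith [hθI.2, (hρ i).le]
  have hxpos : ∀ t, 0 ≤ t → ∀ i, x t i ∈ Set.Ioo 0 (ρ i) := by
    intro t ht i
    -- continuity of the coordinate
    have hficont : ContinuousOn (fun τ => x τ i) (Set.Ici 0) := by
      apply ContinuousOn.congr (continuousOn_const.add (prim_contOn _ (hviint i)))
      intro τ hτ
      exact hxi i τ hτ
    have hIccsub : Set.Icc (0:ℝ) t ⊆ Set.Ici 0 := fun τ hτ => hτ.1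
    -- the two positivity claims
    have hdiffi : ∀ t1 t2, 0 ≤ t1 → t1 ≤ t2 →
        x t2 i - x t1 i = ∫ τ in t1..t2, v τ i := by
      intro t1 t2 h1 h12
      rw [hxi i t1 h1, hxi i t2 (h1.trans h12)]
      have := intervalIntegral.integral_interval_sub_left
        (hviint i t2 (h1.trans h12)) (hviint i t1 h1)
      linarith [this]
    have hsubint : ∀ t1 t2, 0 ≤ t1 → t1 ≤ t2 →
        IntervalIntegrable (fun τ => v τ i) volume t1 t2 := by
      intro t1 t2 h1 h12
      apply (hviint i t2 (h1.trans h12)).mono_set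
      apply Set.uIcc_subset_uIcc
      · rw [Set.uIcc_of_le (h1.trans h12)]; exact ⟨h1, h12⟩
      · rw [Set.uIcc_of_le (h1.trans h12)]; exact ⟨h1.trans h12, le_rfl⟩
    have hcontint : ∀ (f : ℝ → ℝ), ContinuousOn f (Set.Ici 0) → ∀ t1 t2, 0 ≤ t1 → t1 ≤ t2 →
        IntervalIntegrable f volume t1 t2 := by
      intro f hf t1 t2 h1 h12
      apply ContinuousOn.intervalIntegrable
      rw [Set.uIcc_of_le h12]
      exact hf.mono (fun τ hτ => h1.trans hτ.1)
    constructor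
    · -- 0 < x t i
      have := pos_lemma t (fun τ => x τ i) (hficont.mono hIccsub) (hx0pos i).1 ?_ t ⟨ht, le_rfl⟩
      · exact this
      · intro t1 t2 h1 h12 h2t
        show (x t1 i) - (∫ τ in t1..t2, x τ i) ≤ x t2 i
        have hkey : -(∫ τ in t1..t2, x τ i) ≤ ∫ τ in t1..t2, v τ i := by
          rw [← intervalIntegral.integral_neg]
          apply intervalIntegral.integral_mono_ae_restrict h12
            ((hcontint _ hficont t1 t2 h1 h12).neg) (hsubint t1 t2 h1 h12)
          have hres : ∀ᵐ τ ∂(volume.restrict (Set.Icc t1 t2)),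
              ∀ j, -(x τ j) ≤ v τ j ∧ v τ j ≤ ρ j - x τ j :=
            ae_restrict_of_ae_restrict_of_subset (fun τ hτ => h1.trans hτ.1) hbound
          filter_upwards [hres] with τ hτ
          exact (hτ i).1
        have := hdiffi t1 t2 h1 h12
        linarith
    · -- x t i < ρ i
      have := pos_lemma t (fun τ => ρ i - x τ i)
        ((continuousOn_const.sub hficont).mono hIccsub)
        (by simp; exact (hx0pos i).2) ?_ t ⟨ht, le_rfl⟩
      · have h' : 0 < ρ i - x t i := this
        linarith
      · intro t1 t2 h1 h12 h2t
        show (ρ i - x t1 i) - (∫ τ in t1..t2, (ρ i - x τ i)) ≤ ρ i - x t2 i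
        have hkey : (∫ τ in t1..t2, v τ i) ≤ ∫ τ in t1..t2, (ρ i - x τ i) := by
          apply intervalIntegral.integral_mono_ae_restrict h12
            (hsubint t1 t2 h1 h12) (hcontint _ (continuousOn_const.sub hficont) t1 t2 h1 h12)
          have hres : ∀ᵐ τ ∂(volume.restrict (Set.Icc t1 t2)),
              ∀ j, -(x τ j) ≤ v τ j ∧ v τ j ≤ ρ j - x τ j :=
            ae_restrict_of_ae_restrict_of_subset (fun τ hτ => h1.trans hτ.1) hbound
          filter_upwards [hres] with τ hτ
          exact (hτ i).2
        have := hdiffi t1 t2 h1 h12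
        linarith
  have hxint : ∀ t, 0 ≤ t → x t ∈ interior (Xs ρ) := by
    intro t ht
    rw [interior_Xs]
    exact hxpos t ht
  -- continuity and bounds for s
  have hscont : ContinuousOn s (Set.Ici 0) := by
    apply ContinuousOn.congr (continuousOn_const.add (prim_contOn _ hwint))
    intro τ hτ
    exact hseq τ hτ
  have hsB1 : ∀ t, 0 ≤ t → s t ≤ 1 := by
    intro t ht
    have : s t ≤ ∑ i, ρ i := Finset.sum_le_sum (fun i _ => (hXs t ht i).2)
    rwa [hsum] at this
  have hsB0 : ∀ t, 0 ≤ t → 0 ≤ s t :=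
    fun t ht => Finset.sum_nonneg (fun i _ => (hXs t ht i).1)
  -- branch facts
  have hW1 : ∀ᵐ t ∂(volume.restrict (Set.Ici (0:ℝ))),
      s t ∈ Set.Ioo a q → w t = 1 - s t := by
    filter_upwards [hv, ae_restrict_mem measurableSet_Ici] with t hvt ht hmem
    have hcond : ubar uB (sigma' (x t)) < ubar uA (sigma' (x t)) := hleft _ hmem
    rw [Vmap, if_pos ⟨hxint t ht, hcond⟩, Set.mem_singleton_iff] at hvt
    simp only [hwdef, hvt, PiLp.sub_apply]
    rw [Finset.sum_sub_distrib, hsum]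
    rfl
  have hW2 : ∀ᵐ t ∂(volume.restrict (Set.Ici (0:ℝ))),
      s t ∈ Set.Ioo q b → w t = - s t := by
    filter_upwards [hv, ae_restrict_mem measurableSet_Ici] with t hvt ht hmem
    have hcond : ubar uA (sigma' (x t)) < ubar uB (sigma' (x t)) := hright _ hmem
    rw [Vmap, if_neg (fun h => absurd hcond (not_lt.mpr h.2.le)),
      if_pos ⟨hxint t ht, hcond⟩, Set.mem_singleton_iff] at hvt
    simp only [hwdef, hvt, PiLp.neg_apply]
    rw [Finset.sum_neg_distrib]
    rfl
  -- convergence of s to q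
  have hq0 : 0 < q := lt_of_le_of_lt ha haq
  have hq1 : q < 1 := lt_of_lt_of_le hqb hb
  have hlower : ∀ ε, 0 < ε → ∀ᶠ t in Filter.atTop, q - ε ≤ s t := by
    apply scalar_lower s w hscont hwint hseq a q (1 - q) 1 (by linarith) haq hsB1
    · filter_upwards [hW1] with t h1 hmem
      rw [h1 hmem]
      linarith [hmem.2]
    · exact hs0mem.1
  have hupper : ∀ ε, 0 < ε → ∀ᶠ t in Filter.atTop, s t ≤ q + ε := by
    have h := scalar_lower (fun t => -s t) (fun t => -w t) hscont.neg
      (fun t ht => (hwint t ht).neg)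
      (by
        intro t ht
        show -s t = -s 0 + ∫ τ in (0:ℝ)..t, -w τ
        rw [intervalIntegral.integral_neg]
        have := hseq t ht
        linarith)
      (-b) (-q) q 0 hq0 (by linarith)
      (fun t ht => by show -s t ≤ 0; linarith [hsB0 t ht])
      (by
        filter_upwards [hW2] with t h2 hmem
        have hm1 : -b < -s t := hmem.1
        have hm2 : -s t < -q := hmem.2
        have hmem' : s t ∈ Set.Ioo q b := ⟨by linarith, by linarith⟩
        show q ≤ -w t
        rw [h2 hmem']
        simp only [neg_neg]
        linarith [hmem'.1])
      (by show -b < -s 0; linarith [hs0mem.2])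
    intro ε hε
    filter_upwards [h ε hε] with t ht
    have ht' : -q - ε ≤ -s t := ht
    linarith
  have hqtend : Filter.Tendsto s Filter.atTop (nhds q) := by
    rw [Metric.tendsto_atTop]
    intro ε hε
    have h1 := hlower (ε/2) (by linarith)
    have h2 := hupper (ε/2) (by linarith)
    rw [Filter.eventually_atTop] at h1 h2
    obtain ⟨N1, hN1⟩ := h1
    obtain ⟨N2, hN2⟩ := h2
    refine ⟨max N1 N2, fun t ht => ?_⟩
    have := hN1 t ((le_max_left N1 N2).trans ht)
    have := hN2 t ((le_max_right N1 N2).trans ht)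
    rw [Real.dist_eq, abs_lt]
    constructor <;> linarith
  -- decomposition x t = s t • ρ + exp (-t) • (x 0 - s 0 • ρ)
  have hdecay : ∀ i, ∀ t, 0 ≤ t →
      x t i - s t * ρ i = (x 0 i - s 0 * ρ i) * Real.exp (-t) := by
    intro i
    set d : ℝ → ℝ := fun t => x t i - s t * ρ i with hddef
    have hdcont : ContinuousOn d (Set.Ici 0) := by
      apply ContinuousOn.sub
      · apply ContinuousOn.congr (continuousOn_const.add (prim_contOn _ (hviint i)))
        intro τ hτ
        exact hxi i τ hτ
      · exact hscont.mul continuousOn_const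
    have hglobal : ∀ᵐ τ ∂volume, τ ∈ Set.Ici (0:ℝ) →
        ∃ θ : ℝ, θ ∈ Set.Icc (0:ℝ) 1 ∧ v τ = θ • ρ - x τ := by
      rwa [← ae_restrict_iff' measurableSet_Ici]
    have hdeq : ∀ t, 0 ≤ t → d t = d 0 - ∫ τ in (0:ℝ)..t, d τ := by
      intro t ht
      have hdint : IntervalIntegrable d volume 0 t := by
        apply ContinuousOn.intervalIntegrable
        rw [Set.uIcc_of_le ht]
        exact hdcont.mono (fun τ hτ => hτ.1)
      have hcongr : (∫ τ in (0:ℝ)..t, (v τ i - ρ i * w τ)) = ∫ τ in (0:ℝ)..t, -(d τ) := by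
        apply intervalIntegral.integral_congr_ae
        filter_upwards [hglobal] with τ hτ hmem
        have hτ0 : 0 ≤ τ := by
          rw [Set.uIoc_of_le ht] at hmem
          exact hmem.1.le
        obtain ⟨θ, hθI, hθeq⟩ := hτ hτ0
        have hvi : v τ i = θ * ρ i - x τ i := by
          rw [hθeq]; simp [PiLp.sub_apply, PiLp.smul_apply, smul_eq_mul]
        have hwτ : w τ = θ - s τ := by
          simp only [hwdef, hθeq, PiLp.sub_apply, PiLp.smul_apply, smul_eq_mul]
          rw [Finset.sum_sub_distrib, ← Finset.mul_sum, hsum, mul_one]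
          rfl
        rw [hvi, hwτ, hddef]
        ring
      have hstep : d t = d 0 + ((∫ τ in (0:ℝ)..t, v τ i) - ρ i * ∫ τ in (0:ℝ)..t, w τ) := by
        simp only [hddef]
        rw [hxi i t ht, hseq t ht]
        ring
      rw [hstep]
      have hsplit : (∫ τ in (0:ℝ)..t, v τ i) - ρ i * (∫ τ in (0:ℝ)..t, w τ)
          = ∫ τ in (0:ℝ)..t, (v τ i - ρ i * w τ) := by
        rw [intervalIntegral.integral_sub (hviint i t ht)
          ((hwint t ht).const_mul (ρ i)), intervalIntegral.integral_const_mul]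
      rw [hsplit, hcongr, intervalIntegral.integral_neg]
      ring
    have := decay d hdcont hdeq
    intro t ht
    have h := this t ht
    simp only [hddef] at h
    exact h
  -- conclude
  have hform : ∀ t, 0 ≤ t →
      x t = s t • ρ + Real.exp (-t) • (x 0 - s 0 • ρ) := by
    intro t ht
    ext i
    have h := hdecay i t ht
    simp only [PiLp.add_apply, PiLp.smul_apply, PiLp.sub_apply, smul_eq_mul]
    linarith [h]
  have htend : Filter.Tendsto (fun t => s t • ρ + Real.exp (-t) • (x 0 - s 0 • ρ))
      Filter.atTop (nhds (q • ρ + (0:ℝ) • (x 0 - s 0 • ρ))) := by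
    apply Filter.Tendsto.add
    · exact hqtend.smul_const ρ
    · exact (Real.tendsto_exp_neg_atTop_nhds_zero).smul_const _
  rw [zero_smul, add_zero] at htend
  apply htend.congr'
  filter_upwards [Filter.eventually_ge_atTop (0:ℝ)] with t ht
  exact (hform t ht).symm
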